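/- Let z_n satisfy z_{n+1} = 2z_n + b_n + Σ_{i=1}^{⌊n/2⌋−1} c_n(i) + Σ_{i=1}^{⌊n/2⌋−1} g_n(i) + h_n for n ≥ 4, where b_n = h_n = 1, c_n(i) = g_n(i) = C(⌊n/2⌋, i), and z_4 = 6. Then z_n = 2^n − 2^{⌊n/2⌋+1} − 2^{⌈n/2⌉} + 2 for all n ≥ 4. -/

import Mathlib

open Finset

lemma choose_sum_nat (m : ℕ) (hm : 2 ≤ m) :
    ∑ i ∈ Finset.Icc 1 (m-1), m.choose i = 2^m - 2 := by
  have h1 : Finset.Icc 1 (m-1) = Finset.Ico 1 m := by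
    ext x; simp; omega
  have h2 : ∑ i ∈ Finset.range (m+1), m.choose i = 2^m := Nat.sum_range_choose m
  rw [Finset.sum_range_succ] at h2
  have h3 : ∑ i ∈ Finset.range m, m.choose i = m.choose 0 + ∑ i ∈ Finset.Ico 1 m, m.choose i := by
    rw [Finset.range_eq_Ico, Finset.sum_eq_sum_Ico_succ_bot (by omega : 0 < m)]
  rw [h1]
  simp [Nat.choose_self, Nat.choose_zero_right] at h2 h3
  omega

lemma choose_sum_int (m : ℕ) (hm : 2 ≤ m) :
    (∑ i ∈ Finset.Icc 1 (m-1), (m.choose i : ℤ)) = 2^m - 2 := by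
  have := choose_sum_nat m hm
  have h2 : (2:ℕ) ≤ 2^m := by
    calc (2:ℕ) = 2^1 := rfl
    _ ≤ 2^m := Nat.pow_le_pow_right (by norm_num) (by omega)
  rw [← Nat.cast_sum, this, Nat.cast_sub h2]
  push_cast
  ring

/-- The count `z_n` of Majumdar–Ghosh words whose product is the zero matrix:
`z_{n+1} = 2 z_n + b_n + Σ c_n(i) + Σ g_n(i) + h_n` with `b_n = h_n = 1`,
`c_n(i) = g_n(i) = C(⌊n/2⌋, i)`, `z_4 = 6`, gives
`z_n = 2^n − 2^{⌊n/2⌋+1} − 2^{⌈n/2⌉} + 2`. -/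
theorem mg_multiplicity_z (z : ℕ → ℤ)
    (hz : ∀ n, 4 ≤ n → z (n+1) = 2 * z n + 1
      + (∑ i ∈ Finset.Icc 1 (n/2 - 1), ((n/2).choose i : ℤ))
      + (∑ i ∈ Finset.Icc 1 (n/2 - 1), ((n/2).choose i : ℤ)) + 1)
    (iz : z 4 = 6) :
    ∀ n, 4 ≤ n → z n = 2^n - 2^(n/2 + 1) - 2^((n+1)/2) + 2 := by
  intro n hn
  induction n, hn using Nat.le_induction with
  | base => norm_num [iz]
  | succ n hn ih =>
    have hm : 2 ≤ n/2 := by omega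
    have hsum := choose_sum_int (n/2) hm
    rw [hz n hn, ih, hsum]
    have e1 : (n+1+1)/2 = n/2 + 1 := by omega
    have e2 : (n+1)/2 + 1 = (n+1)/2 + 1 := rfl
    rw [e1]
    have p1 : (2:ℤ)^(n+1) = 2 * 2^n := by ring
    have p2 : (2:ℤ)^(n/2+1+1) = 2 * 2^(n/2+1) := by ring
    have p3 : (2:ℤ)^((n+1)/2+1) = 2 * 2^((n+1)/2) := by ring
    have p4 : (2:ℤ)^(n/2+1) = 2 * 2^(n/2) := by ring
    rw [p1, p3, p4]
    ring
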